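/- Let G be a connected graph on n ≥ 3 vertices with clique number ω (2 ≤ ω ≤ n-1), Harary index H, and let G₀ be a clique of G on ω vertices with s = ∑_{v∈V(G₀)} RTr(v). Define c₁₁ = (αs + (1-α)ω(ω-1))/ω, c₁₂ = (1-α)(s - ω(ω-1))/ω, c₂₁ = (1-α)(s - ω(ω-1))/(n-ω), c₂₂ = (α(2H-s) + (1-α)(2H-2s+ω(ω-1)))/(n-ω). Then S_{RD_α}(G) ≥ ((c₁₁+c₂₂)² - 4(c₁₁c₂₂ - c₁₂c₂₁))^{1/2}. -/

import Mathlib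

open Matrix BigOperators Finset

variable {V : Type*} [Fintype V] [DecidableEq V]

/-- Reciprocal distance (Harary) matrix. -/
noncomputable def RD (G : SimpleGraph V) : Matrix V V ℝ :=
  Matrix.of fun i j => if i = j then 0 else (1 : ℝ) / (G.dist i j)

/-- Reciprocal transmission of a vertex. -/
noncomputable def RTr (G : SimpleGraph V) (i : V) : ℝ := ∑ j, RD G i j

/-- Generalized reciprocal distance matrix. -/
noncomputable def RDa (α : ℝ) (G : SimpleGraph V) : Matrix V V ℝ :=
  α • Matrix.diagonal (RTr G) + (1 - α) • RD G

/-- Harary index. -/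
noncomputable def harary (G : SimpleGraph V) : ℝ := (∑ i, RTr G i) / 2

/-- Reciprocal transmission regular graph. -/
def TransRegular (G : SimpleGraph V) : Prop := ∀ i j : V, RTr G i = RTr G j

noncomputable def maxEig {M : Matrix V V ℝ} (hM : M.IsHermitian) : ℝ := ⨆ i, hM.eigenvalues i

noncomputable def minEig {M : Matrix V V ℝ} (hM : M.IsHermitian) : ℝ := ⨅ i, hM.eigenvalues i

/-- Spread of a real symmetric matrix. -/
noncomputable def spread {M : Matrix V V ℝ} (hM : M.IsHermitian) : ℝ := maxEig hM - minEig hM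

open scoped RealInnerProductSpace

lemma rayleigh_bounds [Nonempty V] {A : Matrix V V ℝ} (hA : A.IsHermitian) (v : V → ℝ) :
    minEig hA * (v ⬝ᵥ v) ≤ v ⬝ᵥ (A *ᵥ v) ∧ v ⬝ᵥ (A *ᵥ v) ≤ maxEig hA * (v ⬝ᵥ v) := by
  classical
  set b := hA.eigenvectorBasis with hb
  set x : EuclideanSpace ℝ V := (WithLp.equiv 2 (V → ℝ)).symm v with hx
  set T := Matrix.toEuclideanLin A with hT
  have hsymm : T.IsSymmetric := Matrix.isHermitian_iff_isSymmetric.1 hA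
  have hTb : ∀ i, T (b i) = hA.eigenvalues i • b i := by
    intro i
    apply (WithLp.equiv 2 (V → ℝ)).injective
    simpa [hT, Matrix.ofLp_toEuclideanLin_apply] using hA.mulVec_eigenvectorBasis i
  have hbx : ∀ i, ⟪b i, T x⟫ = hA.eigenvalues i * ⟪b i, x⟫ := by
    intro i
    rw [← hsymm (b i) x, hTb i, real_inner_smul_left]
  have hform : ⟪x, T x⟫ = ∑ i, hA.eigenvalues i * (⟪b i, x⟫)^2 := by
    rw [← b.sum_inner_mul_inner x (T x)]
    refine Finset.sum_congr rfl fun i _ => ?_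
    rw [hbx, real_inner_comm x (b i)]; ring
  have hnorm : ⟪x, x⟫ = ∑ i, (⟪b i, x⟫)^2 := by
    rw [← b.sum_inner_mul_inner x x]
    refine Finset.sum_congr rfl fun i _ => ?_
    rw [real_inner_comm x (b i)]; ring
  have hmax : ∀ i, hA.eigenvalues i ≤ maxEig hA := fun i =>
    le_ciSup (Set.Finite.bddAbove (Set.finite_range _)) i
  have hmin : ∀ i, minEig hA ≤ hA.eigenvalues i := fun i =>
    ciInf_le (Set.Finite.bddBelow (Set.finite_range _)) i
  have hdot1 : ⟪x, x⟫ = v ⬝ᵥ v := by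
    simp [PiLp.inner_apply, dotProduct, hx, RCLike.inner_apply, EuclideanSpace.norm_sq_eq, ← sq]
  have hdot2 : ⟪x, T x⟫ = v ⬝ᵥ (A *ᵥ v) := by
    rw [hT, hx]
    simp [PiLp.inner_apply, dotProduct, RCLike.inner_apply, Matrix.toEuclideanLin_apply_piLp_toLp, mul_comm]
  constructor
  · rw [← hdot1, ← hdot2, hform, hnorm, Finset.mul_sum]
    exact Finset.sum_le_sum fun i _ => mul_le_mul_of_nonneg_right (hmin i) (sq_nonneg _)
  · rw [← hdot1, ← hdot2, hform, hnorm, Finset.mul_sum]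
    exact Finset.sum_le_sum fun i _ => mul_le_mul_of_nonneg_right (hmax i) (sq_nonneg _)

lemma dot_expand (α : ℝ) (G : SimpleGraph V) (v₁ v₂ : V → ℝ) :
    v₁ ⬝ᵥ ((RDa α G) *ᵥ v₂) =
      α * (∑ i, v₁ i * (RTr G i * v₂ i)) + (1 - α) * (∑ i, v₁ i * ∑ j, RD G i j * v₂ j) := by
  have h1 : v₁ ⬝ᵥ (Matrix.diagonal (RTr G) *ᵥ v₂) = ∑ i, v₁ i * (RTr G i * v₂ i) := by
    simp [dotProduct, Matrix.mulVec_diagonal]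
  have h2 : v₁ ⬝ᵥ ((RD G) *ᵥ v₂) = ∑ i, v₁ i * ∑ j, RD G i j * v₂ j := by
    simp [dotProduct, Matrix.mulVec]
  rw [show RDa α G = α • Matrix.diagonal (RTr G) + (1 - α) • RD G from rfl,
    Matrix.add_mulVec, Matrix.smul_mulVec, Matrix.smul_mulVec,
    dotProduct_add, dotProduct_smul, dotProduct_smul, h1, h2]
  simp

lemma clique_RD_sum (G : SimpleGraph V) (K : Finset V) (hcl : G.IsClique K) :
    ∑ i ∈ K, ∑ j ∈ K, RD G i j = (K.card : ℝ) * ((K.card : ℝ) - 1) := by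
  have h1 : ∀ i ∈ K, ∑ j ∈ K, RD G i j = (K.card : ℝ) - 1 := by
    intro i hi
    have : ∀ j ∈ K, RD G i j = 1 - (if j = i then 1 else 0) := by
      intro j hj
      by_cases h : j = i
      · simp [RD, h]
      · have hadj : G.Adj i j := hcl (Finset.mem_coe.mpr hi) (Finset.mem_coe.mpr hj) (Ne.symm h)
        have hd : G.dist i j = 1 := SimpleGraph.dist_eq_one_iff_adj.mpr hadj
        simp [RD, hd, (Ne.symm h : i ≠ j), h]
    rw [Finset.sum_congr rfl this, Finset.sum_sub_distrib]
    rw [Finset.sum_ite_eq' K i (fun _ => (1:ℝ))]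
    simp [hi]
  rw [Finset.sum_congr rfl h1, Finset.sum_const, nsmul_eq_mul]

lemma RD_symm (G : SimpleGraph V) (i j : V) : RD G i j = RD G j i := by
  by_cases h : i = j
  · simp [RD, h]
  · simp only [RD, Matrix.of_apply, if_neg h, if_neg (Ne.symm h)]
    rw [SimpleGraph.dist_comm]

set_option maxHeartbeats 1000000 in
/-- Lower bound for the `RD_α`-spread of a graph with clique number `ω` via the quotient
matrix of the partition into a maximum clique and its complement (Theorem 2.15). -/
theorem RDa_spread_lower_clique {n : ℕ} (hn : 3 ≤ n) (G : SimpleGraph (Fin n))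
    (hG : G.Connected) (α : ℝ) (hα : α ∈ Set.Icc (0 : ℝ) 1)
    (hH : (RDa α G).IsHermitian)
    (ω : ℕ) (hω₁ : 2 ≤ ω) (hω₂ : ω ≤ n - 1) (hclique : G.cliqueNum = ω)
    (K : Finset (Fin n)) (hK : G.IsNClique ω K)
    (s : ℝ) (hs : s = ∑ v ∈ K, RTr G v)
    (c₁₁ c₁₂ c₂₁ c₂₂ : ℝ)
    (hc₁₁ : c₁₁ = (α * s + (1 - α) * ω * (ω - 1)) / ω)
    (hc₁₂ : c₁₂ = (1 - α) * (s - ω * (ω - 1)) / ω)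
    (hc₂₁ : c₂₁ = (1 - α) * (s - ω * (ω - 1)) / (n - ω))
    (hc₂₂ : c₂₂ = (α * (2 * harary G - s) +
      (1 - α) * (2 * harary G - 2 * s + ω * (ω - 1))) / (n - ω)) :
    Real.sqrt ((c₁₁ + c₂₂) ^ 2 - 4 * (c₁₁ * c₂₂ - c₁₂ * c₂₁)) ≤ spread hH := by
  classical
  haveI : Nonempty (Fin n) := ⟨⟨0, by omega⟩⟩
  obtain ⟨hα0, hα1⟩ := hα
  set P : ℝ := (ω : ℝ) with hPdef
  set Q : ℝ := (n : ℝ) - ω with hQdef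
  have hωn : ω < n := by omega
  have hP : 0 < P := by
    have : (0 : ℝ) < (ω : ℝ) := by exact_mod_cast (by omega : 0 < ω)
    simpa [hPdef] using this
  have hQ : 0 < Q := by
    have : (ω : ℝ) < (n : ℝ) := by exact_mod_cast hωn
    simp [hQdef]; linarith
  set u : Fin n → ℝ := fun i => if i ∈ K then 1 else 0 with hu
  set w : Fin n → ℝ := fun i => if i ∈ Kᶜ then 1 else 0 with hw
  have hcard : (K.card : ℝ) = P := by rw [hK.2]
  have hcardc : (Kᶜ.card : ℝ) = Q := by
    rw [Finset.card_compl, hK.2, Fintype.card_fin, Nat.cast_sub (le_of_lt hωn)]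
  -- basic indicator sum reductions
  have hiuL : ∀ (f : Fin n → ℝ) (S : Finset (Fin n)),
      ∑ i, (if i ∈ S then (1:ℝ) else 0) * f i = ∑ i ∈ S, f i := by
    intro f S
    simp [ite_mul, Finset.sum_ite_mem]
  have hiuR : ∀ (f : Fin n → ℝ) (S : Finset (Fin n)),
      ∑ i, f i * (if i ∈ S then (1:ℝ) else 0) = ∑ i ∈ S, f i := by
    intro f S
    simp [mul_ite, Finset.sum_ite_mem]
  -- sums of RD over blocks
  have R1 : ∑ i ∈ K, ∑ j ∈ K, RD G i j = P * (P - 1) := by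
    rw [clique_RD_sum G K hK.1, hcard]
  have Rtot : ∑ i, RTr G i = 2 * harary G := by rw [harary]; ring
  have RsK : ∑ i ∈ K, RTr G i = s := hs.symm
  have RsKc : ∑ i ∈ Kᶜ, RTr G i = 2 * harary G - s := by
    have h := Finset.sum_add_sum_compl K (RTr G)
    rw [RsK, Rtot] at h; linarith
  have hrowsplit : ∀ i, ∑ j ∈ K, RD G i j + ∑ j ∈ Kᶜ, RD G i j = RTr G i := by
    intro i; rw [Finset.sum_add_sum_compl]; rfl
  have R2 : ∑ i ∈ K, ∑ j ∈ Kᶜ, RD G i j = s - P * (P - 1) := by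
    have h : ∑ i ∈ K, (∑ j ∈ K, RD G i j + ∑ j ∈ Kᶜ, RD G i j) = s := by
      rw [Finset.sum_congr rfl fun i _ => hrowsplit i, RsK]
    rw [Finset.sum_add_distrib, R1] at h; linarith
  have R2' : ∑ i ∈ Kᶜ, ∑ j ∈ K, RD G i j = s - P * (P - 1) := by
    rw [Finset.sum_comm (f := fun i j => RD G i j)]
    rw [← R2]
    exact Finset.sum_congr rfl fun i _ => Finset.sum_congr rfl fun j _ => RD_symm G j i
  have R3 : ∑ i ∈ Kᶜ, ∑ j ∈ Kᶜ, RD G i j = 2 * harary G - 2 * s + P * (P - 1) := by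
    have h : ∑ i ∈ Kᶜ, (∑ j ∈ K, RD G i j + ∑ j ∈ Kᶜ, RD G i j) = 2 * harary G - s := by
      rw [Finset.sum_congr rfl fun i _ => hrowsplit i, RsKc]
    rw [Finset.sum_add_distrib, R2'] at h; linarith
  -- the four quadratic form values
  set M := RDa α G with hMdef
  set a : ℝ := u ⬝ᵥ (M *ᵥ u) with hadef
  set b : ℝ := u ⬝ᵥ (M *ᵥ w) with hbdef
  set d : ℝ := w ⬝ᵥ (M *ᵥ w) with hddef
  have hdiagK : ∑ i, u i * (RTr G i * u i) = s := by
    have : ∀ i, u i * (RTr G i * u i) = (if i ∈ K then (1:ℝ) else 0) * RTr G i := by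
      intro i; by_cases h : i ∈ K <;> simp [hu, h]
    rw [Finset.sum_congr rfl fun i _ => this i, hiuL, RsK]
  have hdiagKc : ∑ i, w i * (RTr G i * w i) = 2 * harary G - s := by
    have : ∀ i, w i * (RTr G i * w i) = (if i ∈ Kᶜ then (1:ℝ) else 0) * RTr G i := by
      intro i; by_cases h : i ∈ K <;> simp [hw, Finset.mem_compl, h]
    rw [Finset.sum_congr rfl fun i _ => this i, hiuL, RsKc]
  have hdiag0 : ∑ i, u i * (RTr G i * w i) = 0 := by
    apply Finset.sum_eq_zero; intro i _
    by_cases h : i ∈ K <;> simp [hu, hw, Finset.mem_compl, h]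
  have hoff : ∀ (S T : Finset (Fin n)),
      ∑ i, (if i ∈ S then (1:ℝ) else 0) * ∑ j, RD G i j * (if j ∈ T then (1:ℝ) else 0)
        = ∑ i ∈ S, ∑ j ∈ T, RD G i j := by
    intro S T
    rw [hiuL]
    exact Finset.sum_congr rfl fun i _ => hiuR _ T
  have ha : a = α * s + (1 - α) * (P * (P - 1)) := by
    rw [hadef, hMdef, dot_expand, hdiagK, hu, hoff K K, R1]
  have hb : b = (1 - α) * (s - P * (P - 1)) := by
    rw [hbdef, hMdef, dot_expand, hdiag0, hu, hw, hoff K Kᶜ, R2]; ring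
  have hd : d = α * (2 * harary G - s) + (1 - α) * (2 * harary G - 2 * s + P * (P - 1)) := by
    rw [hddef, hMdef, dot_expand, hdiagKc, hw, hoff Kᶜ Kᶜ, R3]
  have hb' : w ⬝ᵥ (M *ᵥ u) = b := by
    rw [hMdef, dot_expand, hu, hw, hoff Kᶜ K, R2', hb]
    have : ∑ i, (if i ∈ Kᶜ then (1:ℝ) else 0) * (RTr G i * if i ∈ K then (1:ℝ) else 0) = 0 := by
      apply Finset.sum_eq_zero; intro i _
      by_cases h : i ∈ K <;> simp [h]
    rw [this]; ring
  -- norms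
  have hu2 : u ⬝ᵥ u = P := by
    have : ∀ i, u i * u i = (if i ∈ K then (1:ℝ) else 0) * 1 := by
      intro i; by_cases h : i ∈ K <;> simp [hu, h]
    rw [dotProduct, Finset.sum_congr rfl fun i _ => this i, hiuL]
    simp [hcard]
  have hw2 : w ⬝ᵥ w = Q := by
    have : ∀ i, w i * w i = (if i ∈ Kᶜ then (1:ℝ) else 0) * 1 := by
      intro i; by_cases h : i ∈ K <;> simp [hw, Finset.mem_compl, h]
    rw [dotProduct, Finset.sum_congr rfl fun i _ => this i, hiuL]
    simp [hcardc]
  have huw : u ⬝ᵥ w = 0 := by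
    apply Finset.sum_eq_zero; intro i _
    by_cases h : i ∈ K <;> simp [hu, hw, Finset.mem_compl, h]
  -- relate a, b, d to the c's
  have haC : a = c₁₁ * P := by
    rw [hc₁₁, ha]; field_simp [hPdef]
  have hbC : b = c₁₂ * P := by
    rw [hc₁₂, hb]; field_simp [hPdef]
  have hbC' : b = c₂₁ * Q := by
    rw [hc₂₁, hb]; field_simp [hQdef]
  have hdC : d = c₂₂ * Q := by
    rw [hc₂₂, hd]; field_simp [hQdef]
  -- the spectral estimates
  set E : ℝ := Real.sqrt ((a * Q - d * P)^2 + 4 * P * Q * b^2) with hEdef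
  have hargnn : 0 ≤ (a * Q - d * P)^2 + 4 * P * Q * b^2 := by positivity
  have hE0 : 0 ≤ E := Real.sqrt_nonneg _
  have hE2 : E^2 = (a * Q - d * P)^2 + 4 * P * Q * b^2 := Real.sq_sqrt hargnn
  have harg : (c₁₁ + c₂₂) ^ 2 - 4 * (c₁₁ * c₂₂ - c₁₂ * c₂₁) = (E / (P * Q))^2 := by
    have hbb : b^2 = (c₁₂ * P) * (c₂₁ * Q) := by rw [pow_two]; nth_rw 1 [hbC]; rw [hbC']
    rw [div_pow, hE2, haC, hdC, hbb]
    field_simp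
    ring
  rw [harg, Real.sqrt_sq (by positivity : (0:ℝ) ≤ E / (P * Q))]
  -- Rayleigh bounds
  have hray := fun v => rayleigh_bounds hH v
  have hrayu := hray u
  have hrayw := hray w
  rw [hu2] at hrayu
  rw [hw2] at hrayw
  show E / (P * Q) ≤ maxEig hH - minEig hH
  have hPQ : (0:ℝ) < P * Q := mul_pos hP hQ
  by_cases hbz : b = 0
  · -- degenerate case
    have hEabs : E = |a * Q - d * P| := by
      rw [hEdef, hbz]; simp [Real.sqrt_sq_eq_abs]
    have ha1 : minEig hH ≤ a / P := (le_div_iff₀ hP).mpr hrayu.1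
    have ha2 : a / P ≤ maxEig hH := (div_le_iff₀ hP).mpr hrayu.2
    have hd1 : minEig hH ≤ d / Q := (le_div_iff₀ hQ).mpr hrayw.1
    have hd2 : d / Q ≤ maxEig hH := (div_le_iff₀ hQ).mpr hrayw.2
    have hrew : E / (P * Q) = |a / P - d / Q| := by
      rw [hEabs, ← abs_of_pos hPQ, ← abs_div]
      congr 1
      field_simp
    rw [hrew, abs_sub_le_iff]
    constructor <;> linarith
  · -- generic case: use generalized eigenvectors
    set S : ℝ := a * Q + d * P with hSdef
    set μ₁ : ℝ := (S + E) / (2 * P * Q) with hμ₁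
    set μ₂ : ℝ := (S - E) / (2 * P * Q) with hμ₂
    have hroot : ∀ μ : ℝ, μ = μ₁ ∨ μ = μ₂ →
        P * Q * μ^2 - (a * Q + d * P) * μ + (a * d - b^2) = 0 := by
      intro μ hμ
      have hPQ : (2 * P * Q) ≠ 0 := by positivity
      rcases hμ with h | h <;> rw [h]
      · have h4 : P * Q * μ₁^2 - (a * Q + d * P) * μ₁ + (a * d - b^2) =
            (E^2 - ((a * Q - d * P)^2 + 4 * P * Q * b^2)) / (4 * P * Q) := by
          rw [hμ₁, hSdef]; field_simp; ring
        rw [h4, hE2]; simp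
      · have h4 : P * Q * μ₂^2 - (a * Q + d * P) * μ₂ + (a * d - b^2) =
            (E^2 - ((a * Q - d * P)^2 + 4 * P * Q * b^2)) / (4 * P * Q) := by
          rw [hμ₂, hSdef]; field_simp; ring
        rw [h4, hE2]; simp
    have hbil : ∀ (x y : ℝ),
        (x • u + y • w) ⬝ᵥ (M *ᵥ (x • u + y • w)) = x^2 * a + 2 * x * y * b + y^2 * d ∧
        (x • u + y • w) ⬝ᵥ (x • u + y • w) = x^2 * P + y^2 * Q := by
      intro x y
      constructor
      · rw [Matrix.mulVec_add, Matrix.mulVec_smul, Matrix.mulVec_smul,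
          dotProduct_add, add_dotProduct, add_dotProduct,
          smul_dotProduct, smul_dotProduct, smul_dotProduct,
          smul_dotProduct, dotProduct_smul, dotProduct_smul,
          dotProduct_smul, dotProduct_smul, ← hadef, ← hddef, ← hbdef, hb']
        simp only [smul_eq_mul]; ring
      · rw [dotProduct_add, add_dotProduct, add_dotProduct,
          smul_dotProduct, smul_dotProduct, smul_dotProduct,
          smul_dotProduct, dotProduct_smul, dotProduct_smul,
          dotProduct_smul, dotProduct_smul, hu2, hw2, huw]
        have hwu : w ⬝ᵥ u = 0 := by
          rw [dotProduct]
          apply Finset.sum_eq_zero; intro i _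
          by_cases h : i ∈ K <;> simp [hu, hw, Finset.mem_compl, h]
        rw [hwu]
        simp only [smul_eq_mul]; ring
    have key : ∀ μ : ℝ, μ = μ₁ ∨ μ = μ₂ →
        minEig hH ≤ μ ∧ μ ≤ maxEig hH := by
      intro μ hμ
      set y : ℝ := μ * P - a with hy
      have hquad := (hbil b y).1
      have hnrm := (hbil b y).2
      have hval : b^2 * a + 2 * b * y * b + y^2 * d = μ * (b^2 * P + y^2 * Q) := by
        have h0 := hroot μ hμ
        rw [hy]
        linear_combination (-(μ * P - a)) * h0
      have hpos : 0 < b^2 * P + y^2 * Q := by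
        have hb2 : 0 < b^2 := by
          rw [← sq_abs]; exact pow_pos (abs_pos.mpr hbz) 2
        exact add_pos_of_pos_of_nonneg (mul_pos hb2 hP)
          (mul_nonneg (sq_nonneg y) hQ.le)
      have hray' := hray (b • u + y • w)
      rw [hquad, hnrm] at hray'
      constructor
      · have h5 : minEig hH * (b^2 * P + y^2 * Q) ≤ μ * (b^2 * P + y^2 * Q) := by
          rw [← hval]; exact hray'.1
        exact le_of_mul_le_mul_right h5 hpos
      · have h5 : μ * (b^2 * P + y^2 * Q) ≤ maxEig hH * (b^2 * P + y^2 * Q) := by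
          rw [← hval]; exact hray'.2
        exact le_of_mul_le_mul_right h5 hpos
    have h1 := (key μ₁ (Or.inl rfl)).2
    have h2 := (key μ₂ (Or.inr rfl)).1
    have hdiff : μ₁ - μ₂ = E / (P * Q) := by
      rw [hμ₁, hμ₂]; field_simp; ring
    have : E / (P * Q) ≤ maxEig hH - minEig hH := by
      rw [← hdiff]; linarith
    exact this
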